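/- Let C and D be directed-complete cones and f : C → D a function that is linear (additive and commutes with scalar multiplication by ℝ≥0), non-decreasing, and satisfies f(inf F) = inf f(F) for every subset F of C directed for the reverse order. Then f is directed Scott-continuous: for every bounded directed subset E of C, f(sup E) = sup f(E). -/

import Mathlib

class PCone (C : Type*) extends AddCommMonoid C, Module NNReal C where
  cnorm : C → NNReal
  add_left_cancel' : ∀ x y y' : C, x + y = x + y' → y = y'
  cnorm_smul : ∀ (a : NNReal) (x : C), cnorm (a • x) = a * cnorm x
  cnorm_add_le : ∀ x y : C, cnorm (x + y) ≤ cnorm x + cnorm y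
  cnorm_eq_zero : ∀ x : C, cnorm x = 0 → x = 0
  cnorm_le_add : ∀ x y : C, cnorm x ≤ cnorm (x + y)

/-- The cone order: `x ≤ y` iff `y = x + z` for some `z`. -/
def cle {C : Type*} [PCone C] (x y : C) : Prop := ∃ z : C, y = x + z

/-- `b` is an upper bound of `s` for the cone order. -/
def IsUBc {C : Type*} [PCone C] (s : Set C) (b : C) : Prop := ∀ a ∈ s, cle a b

/-- `j` is a least upper bound of `s` for the cone order. -/
def IsLUBc {C : Type*} [PCone C] (s : Set C) (j : C) : Prop :=
  IsUBc s j ∧ ∀ b, IsUBc s b → cle j b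

/-- `b` is a lower bound of `s` for the cone order. -/
def IsLBc {C : Type*} [PCone C] (s : Set C) (b : C) : Prop := ∀ a ∈ s, cle b a

/-- `g` is a greatest lower bound of `s` for the cone order. -/
def IsGLBc {C : Type*} [PCone C] (s : Set C) (g : C) : Prop :=
  IsLBc s g ∧ ∀ b, IsLBc s b → cle b g

/-- `D` is directed for the cone order. -/
def DirC {C : Type*} [PCone C] (D : Set C) : Prop :=
  D.Nonempty ∧ ∀ x ∈ D, ∀ y ∈ D, ∃ z ∈ D, cle x z ∧ cle y z

/-- `D` is directed for the reverse cone order. -/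
def RevDirC {C : Type*} [PCone C] (D : Set C) : Prop :=
  D.Nonempty ∧ ∀ x ∈ D, ∀ y ∈ D, ∃ z ∈ D, cle z x ∧ cle z y



section Aux
variable {C : Type*} [PCone C]

lemma cnorm_zero' : PCone.cnorm (0 : C) = 0 := by
  have h := PCone.cnorm_smul (0 : NNReal) (0 : C)
  simpa using h

lemma eq_zero_of_add_eq_zero' {x y : C} (h : x + y = 0) : x = 0 := by
  apply PCone.cnorm_eq_zero
  have h1 := PCone.cnorm_le_add x y
  rw [h, cnorm_zero'] at h1
  exact le_antisymm h1 zero_le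

lemma cle_refl' (x : C) : cle x x := ⟨0, (add_zero x).symm⟩

lemma cle_smul' (a : NNReal) {x y : C} (h : cle x y) : cle (a • x) (a • y) := by
  obtain ⟨z, hz⟩ := h
  exact ⟨a • z, by rw [hz, smul_add]⟩

lemma cnorm_le_of_cle' {x y : C} (h : cle x y) : PCone.cnorm x ≤ PCone.cnorm y := by
  obtain ⟨z, hz⟩ := h
  rw [hz]; exact PCone.cnorm_le_add x z

end Aux

/-- A linear, non-decreasing function between directed-complete cones that
preserves infima of reverse-directed subsets is directed Scott-continuous. -/
theorem linear_inf_preserving_is_scott_continuous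
    {C D : Type*} [PCone C] [PCone D]
    (hdcC : ∀ S : Set C, (∀ x ∈ S, PCone.cnorm x ≤ 1) → DirC S →
      ∃ s : C, PCone.cnorm s ≤ 1 ∧ IsLUBc S s)
    (hdcD : ∀ S : Set D, (∀ x ∈ S, PCone.cnorm x ≤ 1) → DirC S →
      ∃ s : D, PCone.cnorm s ≤ 1 ∧ IsLUBc S s)
    (f : C → D)
    (hadd : ∀ x y : C, f (x + y) = f x + f y)
    (hsmul : ∀ (a : NNReal) (x : C), f (a • x) = a • f x)
    (hmono : ∀ x y : C, cle x y → cle (f x) (f y))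
    (hinf : ∀ (F : Set C) (g : C), RevDirC F → IsGLBc F g →
      IsGLBc (f '' F) (f g)) :
    ∀ (E : Set C) (s : C), DirC E → (∃ b : C, IsUBc E b) → IsLUBc E s →
      IsLUBc (f '' E) (f s) := by
  intro E s hE _hbdd hlub
  classical
  have cancel : ∀ x y y' : C, x + y = x + y' → y = y' := PCone.add_left_cancel'
  have cancelD : ∀ x y y' : D, x + y = x + y' → y = y' := PCone.add_left_cancel'
  have hf0 : f 0 = 0 := by
    have h := hsmul 0 0
    simpa using h
  set F : Set C := {z : C | ∃ x ∈ E, s = x + z} with hF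
  have hFrev : RevDirC F := by
    constructor
    · obtain ⟨x0, hx0⟩ := hE.1
      obtain ⟨z0, hz0⟩ := hlub.1 x0 hx0
      exact ⟨z0, x0, hx0, hz0⟩
    · rintro z1 ⟨x1, hx1, h1⟩ z2 ⟨x2, hx2, h2⟩
      obtain ⟨x3, hx3, ⟨w1, hw1⟩, ⟨w2, hw2⟩⟩ := hE.2 x1 hx1 x2 hx2
      obtain ⟨z3, hz3⟩ := hlub.1 x3 hx3
      refine ⟨z3, ⟨x3, hx3, hz3⟩, ⟨w1, ?_⟩, ⟨w2, ?_⟩⟩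
      · apply cancel x1
        rw [← h1, hz3, hw1, add_assoc, add_comm z3 w1]
      · apply cancel x2
        rw [← h2, hz3, hw2, add_assoc, add_comm z3 w2]
  have hFglb : IsGLBc F (0 : C) := by
    constructor
    · intro z _; exact ⟨z, (zero_add z).symm⟩
    · intro b hb
      have hxb : ∀ x ∈ E, cle (x + b) s := by
        intro x hx
        obtain ⟨z, hz⟩ := hlub.1 x hx
        obtain ⟨v, hv⟩ := hb z ⟨x, hx, hz⟩
        exact ⟨v, by rw [hz, hv, add_assoc]⟩
      have key : cle (s + b) s := by
        obtain ⟨x0, hx0⟩ := hE.1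
        obtain ⟨w0, hw0⟩ := hxb x0 hx0
        have hs' : s = b + (x0 + w0) := by
          rw [hw0, ← add_assoc, add_comm x0 b, add_assoc]
        have hub : IsUBc E (x0 + w0) := by
          intro x hx
          obtain ⟨wx, hwx⟩ := hxb x hx
          have hx' : s = b + (x + wx) := by
            rw [hwx, ← add_assoc, add_comm x b, add_assoc]
          exact ⟨wx, cancel b _ _ (by rw [← hs', ← hx'])⟩
        obtain ⟨t, ht⟩ := hlub.2 _ hub
        refine ⟨t, ?_⟩
        calc s = b + (x0 + w0) := hs'
          _ = b + (s + t) := by rw [ht]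
          _ = s + b + t := by rw [← add_assoc, add_comm b s]
      obtain ⟨u, hu⟩ := key
      have hbu : b + u = 0 := by
        apply cancel s
        rw [add_zero, ← add_assoc]
        exact hu.symm
      have hb0 : b = 0 := eq_zero_of_add_eq_zero' hbu
      rw [hb0]; exact cle_refl' 0
  have hglbD : IsGLBc (f '' F) (0 : D) := by
    have h := hinf F 0 hFrev hFglb
    rwa [hf0] at h
  have hfEdir : DirC (f '' E) := by
    constructor
    · obtain ⟨x0, hx0⟩ := hE.1
      exact ⟨f x0, x0, hx0, rfl⟩
    · rintro y1 ⟨x1, hx1, rfl⟩ y2 ⟨x2, hx2, rfl⟩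
      obtain ⟨x3, hx3, h13, h23⟩ := hE.2 x1 hx1 x2 hx2
      exact ⟨f x3, ⟨x3, hx3, rfl⟩, hmono _ _ h13, hmono _ _ h23⟩
  have hfsub : IsUBc (f '' E) (f s) := by
    rintro y ⟨x, hx, rfl⟩
    exact hmono _ _ (hlub.1 x hx)
  have hnormle : ∀ y ∈ f '' E, PCone.cnorm y ≤ PCone.cnorm (f s) := by
    intro y hy
    exact cnorm_le_of_cle' (hfsub y hy)
  set a : NNReal := (PCone.cnorm (f s) + 1)⁻¹ with ha
  have hd0 : (PCone.cnorm (f s) + 1) ≠ 0 := by positivity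
  have hainv : a⁻¹ = PCone.cnorm (f s) + 1 := by rw [ha, inv_inv]
  have haa : a⁻¹ * a = 1 := by rw [hainv, ha, mul_inv_cancel₀ hd0]
  have hSnorm : ∀ y ∈ (fun y => a • y) '' (f '' E), PCone.cnorm y ≤ 1 := by
    rintro _ ⟨y, hy, rfl⟩
    rw [PCone.cnorm_smul]
    calc a * PCone.cnorm y ≤ a * (PCone.cnorm (f s) + 1) :=
          mul_le_mul_right (le_trans (hnormle y hy) (le_add_of_nonneg_right zero_le)) a
      _ = 1 := by rw [ha, inv_mul_cancel₀ hd0]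
  have hSdir : DirC ((fun y => a • y) '' (f '' E)) := by
    constructor
    · obtain ⟨y0, hy0⟩ := hfEdir.1
      exact ⟨a • y0, y0, hy0, rfl⟩
    · rintro _ ⟨y1, hy1, rfl⟩ _ ⟨y2, hy2, rfl⟩
      obtain ⟨y3, hy3, h13, h23⟩ := hfEdir.2 y1 hy1 y2 hy2
      exact ⟨a • y3, ⟨y3, hy3, rfl⟩, cle_smul' a h13, cle_smul' a h23⟩
  obtain ⟨u, _, hulub⟩ := hdcD _ hSnorm hSdir
  have hinvsmul : ∀ y : D, a⁻¹ • (a • y) = y := by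
    intro y; rw [smul_smul, haa, one_smul]
  set t : D := a⁻¹ • u with htdef
  have htlub : IsLUBc (f '' E) t := by
    constructor
    · intro y hy
      have h1 := hulub.1 (a • y) ⟨y, hy, rfl⟩
      have h2 := cle_smul' a⁻¹ h1
      rwa [hinvsmul] at h2
    · intro b hb
      have hub : IsUBc ((fun y => a • y) '' (f '' E)) (a • b) := by
        rintro _ ⟨y, hy, rfl⟩
        exact cle_smul' a (hb y hy)
      have h3 := cle_smul' a⁻¹ (hulub.2 _ hub)
      rwa [hinvsmul] at h3
  obtain ⟨r, hr⟩ := htlub.2 _ hfsub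
  have hrlb : IsLBc (f '' F) r := by
    rintro _ ⟨z, ⟨x, hx, hxz⟩, rfl⟩
    obtain ⟨w, hw⟩ := htlub.1 (f x) ⟨x, hx, rfl⟩
    refine ⟨w, ?_⟩
    apply cancelD (f x)
    rw [← hadd, ← hxz, hr, hw, add_assoc, add_comm r w]
  obtain ⟨w, hw⟩ := hglbD.2 r hrlb
  have hr0 : r = 0 := eq_zero_of_add_eq_zero' hw.symm
  rw [hr0, add_zero] at hr
  rw [hr]
  exact htlub
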